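/- Let Y ⊆ ℝ^m be a nonempty convex set of diameter at most D_y, let x ∈ ℝ^n be fixed, let F(x,·) : Y → ℝ be concave on Y, and let d(x,·) : Y → ℝ^{m̃} have each component convex on Y. Fix λ ∈ ℝ^{m̃} with λ ≥ 0 componentwise, ρ > 0, ε > 0 and y' ∈ Y, and set λ' = [λ + ρ d(x,y')]_+ and L_y(x,y,λ;ρ) = F(x,y) − (‖[λ + ρ d(x,y)]_+‖² − ‖λ‖²)/(2ρ). Suppose u ∈ ℝ^m with ‖u‖ ≤ ε is a supergradient of the concave function y ↦ L_y(x,y,λ;ρ) at y', i.e. L_y(x,y,λ;ρ) ≤ L_y(x,y',λ;ρ) + ⟨u, y − y'⟩ for all y ∈ Y. Then sup{F(x,y) : y ∈ Y, d(x,y) ≤ 0 componentwise} ≤ F(x,y') − (‖λ'‖² − ‖λ‖²)/(2ρ) + D_y·ε. -/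

import Mathlib

/-- Componentwise positive part `[v]₊` of a vector. -/
noncomputable def posPart {k : ℕ} (v : EuclideanSpace ℝ (Fin k)) : EuclideanSpace ℝ (Fin k) :=
  WithLp.toLp 2 (fun i => max (v i) 0)

/-- Per-iteration inequality controlling the growth of the dual
multipliers: if `u` with `‖u‖ ≤ ε` is a supergradient on `Y` of the concave augmented
Lagrangian `y ↦ L_y(x,y,λ;ρ)` at `y'`, and `λ' = [λ + ρ d(x,y')]₊`, then the constrained
maximal value is at most `F(x,y') − (‖λ'‖² − ‖λ‖²)/(2ρ) + D_y ε`. -/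
theorem dual_growth_control {n m mt : ℕ}
    (Y : Set (EuclideanSpace ℝ (Fin m))) (hYne : Y.Nonempty) (hYcv : Convex ℝ Y)
    (Dy : ℝ) (hdY : ∀ u ∈ Y, ∀ v ∈ Y, ‖u - v‖ ≤ Dy)
    (x : EuclideanSpace ℝ (Fin n))
    (F : EuclideanSpace ℝ (Fin n) → EuclideanSpace ℝ (Fin m) → ℝ)
    (hFconc : ConcaveOn ℝ Y (F x))
    (d : EuclideanSpace ℝ (Fin n) → EuclideanSpace ℝ (Fin m) → EuclideanSpace ℝ (Fin mt))
    (hdconv : ∀ i, ConvexOn ℝ Y (fun y => d x y i))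
    (lam : EuclideanSpace ℝ (Fin mt)) (hlam : ∀ i, 0 ≤ lam i)
    (ρ ε : ℝ) (hρ : 0 < ρ) (hε : 0 < ε)
    (y' : EuclideanSpace ℝ (Fin m)) (hy' : y' ∈ Y)
    (u : EuclideanSpace ℝ (Fin m)) (hu : ‖u‖ ≤ ε)
    -- u is a supergradient of y ↦ L_y(x,y,λ;ρ) at y' on Y
    (hsuper : ∀ y ∈ Y,
      F x y - (‖posPart (lam + ρ • d x y)‖ ^ 2 - ‖lam‖ ^ 2) / (2 * ρ)
        ≤ F x y' - (‖posPart (lam + ρ • d x y')‖ ^ 2 - ‖lam‖ ^ 2) / (2 * ρ)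
          + @inner ℝ _ _ u (y - y')) :
    (⨆ y ∈ {y ∈ Y | ∀ i, d x y i ≤ 0}, ((F x y : ℝ) : EReal))
      ≤ ((F x y' - (‖posPart (lam + ρ • d x y')‖ ^ 2 - ‖lam‖ ^ 2) / (2 * ρ)
          + Dy * ε : ℝ) : EReal) := by
  apply iSup₂_le
  intro y hy
  obtain ⟨hyY, hyd⟩ := hy
  rw [EReal.coe_le_coe_iff]
  have hnorm : ‖posPart (lam + ρ • d x y)‖ ≤ ‖lam‖ := by
    rw [EuclideanSpace.norm_eq, EuclideanSpace.norm_eq]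
    apply Real.sqrt_le_sqrt
    apply Finset.sum_le_sum
    intro i _
    have happ : posPart (lam + ρ • d x y) i = max (lam i + ρ * d x y i) 0 := rfl
    have h1 : lam i + ρ * d x y i ≤ lam i := by nlinarith [hyd i, hρ.le]
    have h2 : (0:ℝ) ≤ lam i := hlam i
    have h3 : max (lam i + ρ * d x y i) 0 ≤ lam i := max_le h1 h2
    rw [happ]
    simp only [Real.norm_eq_abs, sq_abs]
    exact pow_le_pow_left₀ (le_max_right _ _) h3 2
  have hsq : ‖posPart (lam + ρ • d x y)‖ ^ 2 ≤ ‖lam‖ ^ 2 :=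
    pow_le_pow_left₀ (norm_nonneg _) hnorm 2
  have hdiv : (‖posPart (lam + ρ • d x y)‖ ^ 2 - ‖lam‖ ^ 2) / (2 * ρ) ≤ 0 :=
    div_nonpos_of_nonpos_of_nonneg (by linarith) (by linarith)
  have hinner : @inner ℝ _ _ u (y - y') ≤ Dy * ε := by
    calc @inner ℝ _ _ u (y - y') ≤ ‖u‖ * ‖y - y'‖ := real_inner_le_norm u (y - y')
      _ ≤ ε * Dy := mul_le_mul hu (hdY y hyY y' hy') (norm_nonneg _) hε.le
      _ = Dy * ε := mul_comm ε Dy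
  have key := hsuper y hyY
  linarith
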